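/- For every non-negative integer n and nonzero complex a, the sum ∑_{j=0}^{2n} (-a/2)^(-j) · E(j, (a+1)/2) / (j! · (2n-j)!) equals E(2n) / ((2n)! · a^(2n)), where E(m,x) is the Euler polynomial and E(m) the Euler number. -/

import Mathlib

/-- The `n`-th Euler polynomial (as a function `ℂ → ℂ`), defined via Bernoulli
polynomials by `E_n(x) = 2^{n+1}/(n+1) * (B_{n+1}((x+1)/2) - B_{n+1}(x/2))`,
which is equivalent to the generating function `2 e^{xt}/(e^t+1) = ∑ E_n(x) t^n/n!`. -/
noncomputable def eulerPoly (n : ℕ) (x : ℂ) : ℂ :=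
  (2 : ℂ) ^ (n + 1) / (n + 1) *
    (Polynomial.aeval ((x + 1) / 2) (Polynomial.bernoulli (n + 1)) -
     Polynomial.aeval (x / 2) (Polynomial.bernoulli (n + 1)))

/-- The `n`-th Euler number, `E_n = 2^n E_n(1/2)`. -/
noncomputable def eulerNumber (n : ℕ) : ℂ := 2 ^ n * eulerPoly n (1 / 2)

lemma aeval_bernoulli_eq (n : ℕ) (z : ℂ) :
    Polynomial.aeval z (Polynomial.bernoulli n) =
    ∑ i ∈ Finset.range (n + 1),
      ((_root_.bernoulli i : ℚ) : ℂ) * (n.choose i : ℂ) * z ^ (n - i) := by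
  rw [Polynomial.bernoulli, map_sum]
  refine Finset.sum_congr rfl fun i _ => ?_
  simp [Polynomial.aeval_monomial]



lemma bernoulli_aeval_add (n : ℕ) (x y : ℂ) :
    Polynomial.aeval (x + y) (Polynomial.bernoulli n) =
    ∑ k ∈ Finset.range (n + 1), (n.choose k : ℂ) *
      Polynomial.aeval x (Polynomial.bernoulli k) * y ^ (n - k) := by
  calc Polynomial.aeval (x + y) (Polynomial.bernoulli n)
      = ∑ i ∈ Finset.range (n+1),
          ((_root_.bernoulli i : ℚ):ℂ) * (n.choose i : ℂ) * (x+y)^(n-i) :=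
        aeval_bernoulli_eq n (x+y)
    _ = ∑ i ∈ Finset.range (n+1), ∑ m ∈ Finset.range (n-i+1),
          ((_root_.bernoulli i : ℚ):ℂ) * (n.choose i : ℂ) * ((n-i).choose m : ℂ)
            * x^m * y^(n-i-m) := by
        refine Finset.sum_congr rfl fun i _ => ?_
        rw [add_pow, Finset.mul_sum]
        refine Finset.sum_congr rfl fun m _ => ?_
        ring
    _ = ∑ i ∈ Finset.range (n+1), ∑ k ∈ Finset.Ico i (n+1),
          ((_root_.bernoulli i : ℚ):ℂ) * (n.choose i : ℂ) * ((n-i).choose (k-i) : ℂ)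
            * x^(k-i) * y^(n-k) := by
        refine Finset.sum_congr rfl fun i hi => ?_
        have hi' : i ≤ n := Finset.mem_range_succ_iff.mp hi
        rw [Finset.sum_Ico_eq_sum_range]
        have h1 : n + 1 - i = n - i + 1 := by omega
        rw [h1]
        refine Finset.sum_congr rfl fun m hm => ?_
        have h2 : i + m - i = m := by omega
        have h3 : n - (i + m) = n - i - m := by omega
        rw [h2, h3]
    _ = ∑ k ∈ Finset.range (n+1), ∑ i ∈ Finset.range (k+1),
          ((_root_.bernoulli i : ℚ):ℂ) * (n.choose i : ℂ) * ((n-i).choose (k-i) : ℂ)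
            * x^(k-i) * y^(n-k) := by
        rw [Finset.range_eq_Ico, Finset.sum_Ico_Ico_comm]
        simp only [Finset.range_eq_Ico]
    _ = ∑ k ∈ Finset.range (n+1), (n.choose k : ℂ) *
          Polynomial.aeval x (Polynomial.bernoulli k) * y ^ (n - k) := by
        refine Finset.sum_congr rfl fun k hk => ?_
        have hk' : k ≤ n := Finset.mem_range_succ_iff.mp hk
        rw [aeval_bernoulli_eq, Finset.mul_sum, Finset.sum_mul]
        refine Finset.sum_congr rfl fun i hi => ?_
        have hi' : i ≤ k := Finset.mem_range_succ_iff.mp hi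
        have hc := Nat.choose_mul (n := n) hi'
        have hc' : (n.choose k : ℂ) * (k.choose i : ℂ) =
            (n.choose i : ℂ) * ((n-i).choose (k-i) : ℂ) := by exact_mod_cast congrArg (Nat.cast : ℕ → ℂ) hc
        linear_combination (-(((_root_.bernoulli i : ℚ):ℂ) * x^(k-i) * y^(n-k))) * hc'

lemma eulerPoly_add (j : ℕ) (x y : ℂ) :
    eulerPoly j (x + y) =
      ∑ k ∈ Finset.range (j + 1), (j.choose k : ℂ) * eulerPoly k x * y ^ (j - k) := by
  have h2 : (x + y + 1) / 2 = (x + 1) / 2 + y / 2 := by ring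
  have h3 : (x + y) / 2 = x / 2 + y / 2 := by ring
  rw [eulerPoly, h2, h3, bernoulli_aeval_add, bernoulli_aeval_add, ← Finset.sum_sub_distrib,
    Finset.mul_sum, Finset.sum_range_succ']
  have h0 : ((j+1).choose 0 : ℂ) * Polynomial.aeval ((x+1)/2) (Polynomial.bernoulli 0) * (y/2)^(j+1-0)
      - ((j+1).choose 0 : ℂ) * Polynomial.aeval (x/2) (Polynomial.bernoulli 0) * (y/2)^(j+1-0) = 0 := by
    simp [Polynomial.bernoulli_zero]
  rw [h0, mul_zero, add_zero]
  refine Finset.sum_congr rfl fun k hk => ?_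
  have hk' : k ≤ j := Finset.mem_range_succ_iff.mp hk
  have hc := Nat.add_one_mul_choose_eq j k
  have hc' : ((j:ℂ)+1) * (j.choose k : ℂ) = ((j+1).choose (k+1) : ℂ) * ((k:ℂ)+1) := by
    exact_mod_cast congrArg (Nat.cast : ℕ → ℂ) hc
  have hs : j + 1 - (k + 1) = j - k := by omega
  have hp : (2:ℂ)^(j+1) = 2^(k+1) * 2^(j-k) := by
    rw [← pow_add]; congr 1; omega
  have hj : ((j:ℂ)+1) ≠ 0 := Nat.cast_add_one_ne_zero j
  have hk2 : ((k:ℂ)+1) ≠ 0 := Nat.cast_add_one_ne_zero k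
  rw [eulerPoly, hs, div_pow]
  have h2k : (2:ℂ)^(j-k) ≠ 0 := pow_ne_zero _ two_ne_zero
  field_simp
  linear_combination (-(2^(k+1) * 2^(j-k) * y^(j-k) *
    (Polynomial.aeval ((x+1)/2) (Polynomial.bernoulli (k+1)) -
     Polynomial.aeval (x/2) (Polynomial.bernoulli (k+1))))) * hc' +
    ((((j+1).choose (k+1) : ℂ)) * y^(j-k) * ((k:ℂ)+1) *
    (Polynomial.aeval ((x+1)/2) (Polynomial.bernoulli (k+1)) -
     Polynomial.aeval (x/2) (Polynomial.bernoulli (k+1)))) * hp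


lemma alt_sum_C (M : ℕ) :
    ∑ m ∈ Finset.range (M + 1), (-1:ℂ)^m * (M.choose m : ℂ) =
      if M = 0 then 1 else 0 := by
  have h := Int.alternating_sum_range_choose (n := M)
  have h2 := congrArg (Int.cast : ℤ → ℂ) h
  push_cast at h2
  rcases eq_or_ne M 0 with h0 | h0
  · subst h0; simp
  · rw [if_neg h0] at h2 ⊢; exact_mod_cast h2

/-- Known Euler polynomial sum identity (NIST 24.4.13):
`∑_{j=0}^{2n} (-a/2)^{-j} E(j,(a+1)/2) / (j! (2n-j)!) = E(2n) / ((2n)! a^{2n})`. -/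
theorem euler_poly_sum' (n : ℕ) (a : ℂ) (ha : a ≠ 0) :
    ∑ j ∈ Finset.range (2 * n + 1),
      (-a / 2) ^ (-(j : ℤ)) * eulerPoly j ((a + 1) / 2) /
        ((Nat.factorial j : ℂ) * (Nat.factorial (2 * n - j) : ℂ)) =
    eulerNumber (2 * n) / ((Nat.factorial (2 * n) : ℂ) * a ^ (2 * n)) := by
  have hNf : ((2*n).factorial : ℂ) ≠ 0 := Nat.cast_ne_zero.mpr (Nat.factorial_ne_zero _)
  have step1 : ∀ j ∈ Finset.range (2*n+1),
      (-a / 2) ^ (-(j : ℤ)) * eulerPoly j ((a + 1) / 2) /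
        ((Nat.factorial j : ℂ) * (Nat.factorial (2 * n - j) : ℂ)) =
      ∑ k ∈ Finset.range (j+1),
        (-1:ℂ)^j * ((2*n).choose j : ℂ) * (j.choose k : ℂ) *
          (eulerNumber k / (((2*n).factorial : ℂ) * a^k)) := by
    intro j hj
    have hj' : j ≤ 2*n := Finset.mem_range_succ_iff.mp hj
    have hx : (a+1)/2 = 1/2 + a/2 := by ring
    rw [hx, eulerPoly_add, Finset.mul_sum, Finset.sum_div]
    refine Finset.sum_congr rfl fun k hk => ?_
    have hk' : k ≤ j := Finset.mem_range_succ_iff.mp hk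
    obtain ⟨m, rfl⟩ : ∃ m, j = k + m := ⟨j - k, (Nat.add_sub_cancel' hk').symm⟩
    have hfact := Nat.choose_mul_factorial_mul_factorial hj'
    have hfact' : ((2*n).choose (k+m) : ℂ) * ((k+m).factorial : ℂ) * ((2*n-(k+m)).factorial : ℂ)
        = ((2*n).factorial : ℂ) := by exact_mod_cast congrArg (Nat.cast : ℕ → ℂ) hfact
    have hzpow : (-a/2 : ℂ) ^ (-((k+m : ℕ):ℤ)) = ((-a/2)^(k+m))⁻¹ := by
      rw [zpow_neg, zpow_natCast]
    have h1 : k + m - k = m := by omega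
    have hA : (-a/2:ℂ)^(k+m) = (-1)^(k+m) * ((a^k/2^k) * (a^m/2^m)) := by
      rw [neg_div, neg_pow, pow_add (a/2), div_pow, div_pow]
    rw [hzpow, h1, eulerNumber, hA, ← hfact', div_pow]
    have hjf : (((k+m).factorial : ℕ) : ℂ) ≠ 0 := Nat.cast_ne_zero.mpr (Nat.factorial_ne_zero _)
    have hjf2 : (((2*n-(k+m)).factorial : ℕ) : ℂ) ≠ 0 := Nat.cast_ne_zero.mpr (Nat.factorial_ne_zero _)
    have hcne : ((2*n).choose (k+m) : ℂ) ≠ 0 :=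
      Nat.cast_ne_zero.mpr (Nat.choose_pos hj').ne'
    have hak : (a : ℂ)^k ≠ 0 := pow_ne_zero _ ha
    have ham : (a : ℂ)^m ≠ 0 := pow_ne_zero _ ha
    have h2kne : (2:ℂ)^k ≠ 0 := pow_ne_zero _ two_ne_zero
    have h2mne : (2:ℂ)^m ≠ 0 := pow_ne_zero _ two_ne_zero
    have hm1 : ((-1:ℂ))^(k+m) ≠ 0 := pow_ne_zero _ (by norm_num)
    have hsq : ((-1:ℂ))^(k+m) * (-1)^(k+m) = 1 := by
      rw [← pow_add]; exact Even.neg_one_pow ⟨k+m, by ring⟩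
    field_simp
    linear_combination (-(((k+m).choose k : ℂ) * eulerPoly k (1/2))) * hsq
  rw [Finset.sum_congr rfl step1]
  simp only [Finset.range_eq_Ico]
  rw [← Finset.sum_Ico_Ico_comm 0 (2*n+1) (fun k j =>
      (-1:ℂ)^j * ((2*n).choose j : ℂ) * (j.choose k : ℂ) *
        (eulerNumber k / (((2*n).factorial : ℂ) * a^k)))]
  have step2 : ∀ k ∈ Finset.Ico 0 (2*n+1),
      (∑ j ∈ Finset.Ico k (2*n+1),
        (-1:ℂ)^j * ((2*n).choose j : ℂ) * (j.choose k : ℂ) *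
          (eulerNumber k / (((2*n).factorial : ℂ) * a^k))) =
      (if k = 2*n then
        (-1:ℂ)^k * ((2*n).choose k : ℂ) * (eulerNumber k / (((2*n).factorial : ℂ) * a^k))
       else 0) := by
    intro k hk
    have hk' : k ≤ 2*n := by
      have := (Finset.mem_Ico.mp hk).2; omega
    have hswap : ∀ j ∈ Finset.Ico k (2*n+1),
        (-1:ℂ)^j * ((2*n).choose j : ℂ) * (j.choose k : ℂ) *
          (eulerNumber k / (((2*n).factorial : ℂ) * a^k)) =
        (-1:ℂ)^j * ((2*n).choose k : ℂ) * (((2*n)-k).choose (j-k) : ℂ) *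
          (eulerNumber k / (((2*n).factorial : ℂ) * a^k)) := by
      intro j hj
      obtain ⟨hj1, hj2⟩ := Finset.mem_Ico.mp hj
      have hj' : j ≤ 2*n := by omega
      have hc := Nat.choose_mul (n := 2*n) hj1
      have hc' : ((2*n).choose j : ℂ) * (j.choose k : ℂ)
          = ((2*n).choose k : ℂ) * (((2*n)-k).choose (j-k) : ℂ) := by
        exact_mod_cast congrArg (Nat.cast : ℕ → ℂ) hc
      linear_combination ((-1:ℂ)^j * (eulerNumber k / (((2*n).factorial : ℂ) * a^k))) * hc'
    rw [Finset.sum_congr rfl hswap, Finset.sum_Ico_eq_sum_range]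
    have hrange : 2*n + 1 - k = (2*n - k) + 1 := by omega
    rw [hrange]
    have hterm : ∀ m ∈ Finset.range ((2*n-k)+1),
        (-1:ℂ)^(k+m) * ((2*n).choose k : ℂ) * (((2*n)-k).choose ((k+m)-k) : ℂ) *
          (eulerNumber k / (((2*n).factorial : ℂ) * a^k)) =
        ((-1:ℂ)^k * ((2*n).choose k : ℂ) *
          (eulerNumber k / (((2*n).factorial : ℂ) * a^k))) *
          ((-1:ℂ)^m * (((2*n)-k).choose m : ℂ)) := by
      intro m _
      have h1 : (k+m) - k = m := by omega
      rw [h1, pow_add]; ring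
    rw [Finset.sum_congr rfl hterm, ← Finset.mul_sum, alt_sum_C]
    by_cases h0 : k = 2*n
    · rw [if_pos (by omega : 2*n - k = 0), if_pos h0]; ring
    · rw [if_neg (by omega : ¬ (2*n - k = 0)), if_neg h0]; ring
  rw [Finset.sum_congr rfl step2]
  rw [← Finset.range_eq_Ico, Finset.sum_ite_eq' (Finset.range (2*n+1)) (2*n)
    (fun k => (-1:ℂ)^k * ((2*n).choose k : ℂ) *
      (eulerNumber k / (((2*n).factorial : ℂ) * a^k)))]
  rw [if_pos (Finset.self_mem_range_succ (2*n))]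
  rw [Nat.choose_self, Even.neg_one_pow (even_two_mul n)]
  simp
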